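/- arXiv:2504.21178 — 5 statements merged into one kernel-verified Lean document; each statement's English description precedes it below -/
import Mathlib

section
/- Let x_1, ..., x_N be N distinct real numbers with minimum spacing D_min = min_{1 ≤ i < k ≤ N} |x_i − x_k| and maximum spacing D_max = max_{1 ≤ i < k ≤ N} |x_i − x_k|, let a_1, ..., a_A be complex numbers, and let E(x) = ∏_{j=1}^{A} (x − a_j). If x_k is a safe point (i.e., |x_k − a_j| ≥ D_min/2 for every j), then for any evaluation point x_i one has |E(x_i)| ≤ (1 + 2·D_max/D_min)^A · |E(x_k)|. -/
/-- If `x k` is a safe point, then for any evaluation point `x i`,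
`|E(x i)| ≤ (1 + 2 Dmax / Dmin)^A * |E(x k)|`, where `E(x) = ∏ j, (x - a j)`. -/
theorem safe_point_ratio_bound {N A : ℕ} (hN : 2 ≤ N)
    (x : Fin N → ℝ) (hx : Function.Injective x)
    (Dmin Dmax : ℝ)
    (hDmin : IsLeast {d : ℝ | ∃ i k : Fin N, i ≠ k ∧ d = |x i - x k|} Dmin)
    (hDmax : IsGreatest {d : ℝ | ∃ i k : Fin N, i ≠ k ∧ d = |x i - x k|} Dmax)
    (a : Fin A → ℂ) (k : Fin N)
    (hsafe : ∀ j : Fin A, Dmin / 2 ≤ ‖(x k : ℂ) - a j‖)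
    (i : Fin N) :
    ‖∏ j : Fin A, ((x i : ℂ) - a j)‖
      ≤ (1 + 2 * Dmax / Dmin) ^ A * ‖∏ j : Fin A, ((x k : ℂ) - a j)‖ := by
  -- Dmin > 0
  obtain ⟨⟨p, q, hpq, hDeq⟩, hlb⟩ := hDmin
  have hDminpos : 0 < Dmin := by
    rw [hDeq]
    exact abs_pos.mpr (sub_ne_zero.mpr (fun h => hpq (hx h)))
  -- |x i - x k| ≤ Dmax
  have hik : |x i - x k| ≤ Dmax := by
    rcases eq_or_ne i k with rfl | h
    · simp only [sub_self, abs_zero]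
      have : Dmin ≤ Dmax := hDmax.2 ⟨p, q, hpq, hDeq⟩
      linarith
    · exact hDmax.2 ⟨i, k, h, rfl⟩
  have hc1 : (1:ℝ) ≤ 1 + 2 * Dmax / Dmin := by
    have : 0 ≤ Dmax := le_trans (abs_nonneg _) hik
    have := div_nonneg (by linarith : (0:ℝ) ≤ 2 * Dmax) hDminpos.le
    linarith
  rw [norm_prod, norm_prod]
  have key : ∀ j : Fin A, ‖(x i : ℂ) - a j‖
      ≤ (1 + 2 * Dmax / Dmin) * ‖(x k : ℂ) - a j‖ := by
    intro j
    have h1 : ‖(x i : ℂ) - a j‖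
        ≤ ‖(x i : ℂ) - x k‖ + ‖(x k : ℂ) - a j‖ := by
      calc ‖(x i : ℂ) - a j‖
          = ‖((x i : ℂ) - x k) + ((x k : ℂ) - a j)‖ := by ring_nf
        _ ≤ _ := norm_add_le _ _
    have h2 : ‖(x i : ℂ) - x k‖ ≤ Dmax := by
      rw [show ((x i : ℂ) - x k) = ((x i - x k : ℝ) : ℂ) by push_cast; ring,
        Complex.norm_real, Real.norm_eq_abs]
      exact hik
    have h3 : Dmin / 2 ≤ ‖(x k : ℂ) - a j‖ := hsafe j
    have h4 : Dmax ≤ (2 * Dmax / Dmin) * ‖(x k : ℂ) - a j‖ := by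
      rw [div_mul_eq_mul_div, le_div_iff₀ hDminpos]
      nlinarith [le_trans (abs_nonneg _) hik]
    nlinarith
  calc ∏ j : Fin A, ‖(x i : ℂ) - a j‖
      ≤ ∏ j : Fin A, ((1 + 2 * Dmax / Dmin) * ‖(x k : ℂ) - a j‖) :=
        Finset.prod_le_prod (fun j _ => norm_nonneg _) (fun j _ => key j)
    _ = (1 + 2 * Dmax / Dmin) ^ A * ∏ j : Fin A, ‖(x k : ℂ) - a j‖ := by
        rw [Finset.prod_mul_distrib, Finset.prod_const, Finset.card_univ, Fintype.card_fin]
end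

section
/- Let H be a real polynomial of degree at most d, let y_0, y_1, ..., y_d be d+1 distinct real numbers with |y_j − y_k| ≥ d_min > 0 for all j ≠ k, and let z be a real number with |z − y_k| ≤ d_max for every k, where d_max ≥ d_min. Then |H(z)| ≤ (d_max/d_min)^d · ∑_{j=0}^{d} |H(y_j)|. -/
open Polynomial Finset

/-- If `H` is a real polynomial of degree at most `d`, the nodes
`y 0, …, y d` have pairwise distances at least `dmin > 0`, and `z` is within
distance `dmax ≥ dmin` of every node, then
`|H(z)| ≤ (dmax/dmin)^d * ∑ j, |H(y j)|`. -/
theorem polynomial_interpolation_bound {d : ℕ} (H : Polynomial ℝ)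
    (hH : H.natDegree ≤ d)
    (y : Fin (d + 1) → ℝ)
    (dmin dmax : ℝ) (hdmin : 0 < dmin) (hdd : dmin ≤ dmax)
    (hy : ∀ j k : Fin (d + 1), j ≠ k → dmin ≤ |y j - y k|)
    (z : ℝ) (hz : ∀ k : Fin (d + 1), |z - y k| ≤ dmax) :
    |H.eval z| ≤ (dmax / dmin) ^ d * ∑ j : Fin (d + 1), |H.eval (y j)| := by
  have hinj : Set.InjOn y (Finset.univ : Finset (Fin (d + 1))) := by
    intro a _ b _ hab
    by_contra hne
    have := hy a b hne
    rw [hab, sub_self, abs_zero] at this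
    linarith
  have hdeg : H.degree < (Finset.univ : Finset (Fin (d + 1))).card := by
    rw [Finset.card_univ, Fintype.card_fin]
    exact lt_of_le_of_lt Polynomial.degree_le_natDegree
      (by exact_mod_cast Nat.lt_succ_of_le hH)
  have key := Lagrange.eq_interpolate (f := H) hinj hdeg
  -- bound the basis polynomial evaluation
  have hbasis : ∀ i : Fin (d + 1),
      |(Lagrange.basis Finset.univ y i).eval z| ≤ (dmax / dmin) ^ d := by
    intro i
    rw [Lagrange.basis, Polynomial.eval_prod, Finset.abs_prod]
    have hcard : (Finset.univ.erase i).card = d := by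
      rw [Finset.card_erase_of_mem (Finset.mem_univ i), Finset.card_univ,
        Fintype.card_fin, Nat.add_sub_cancel]
    calc ∏ j ∈ Finset.univ.erase i, |(Lagrange.basisDivisor (y i) (y j)).eval z|
        ≤ ∏ _j ∈ Finset.univ.erase i, (dmax / dmin) := by
          apply Finset.prod_le_prod (fun _ _ => abs_nonneg _)
          intro j hj
          have hji : i ≠ j := (Finset.mem_erase.mp hj).1.symm
          have h1 : dmin ≤ |y i - y j| := hy i j hji
          have h2 : |z - y j| ≤ dmax := hz j
          rw [Lagrange.basisDivisor, Polynomial.eval_mul, Polynomial.eval_C,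
            Polynomial.eval_sub, Polynomial.eval_X, Polynomial.eval_C, abs_mul,
            abs_inv]
          rw [inv_mul_eq_div]
          exact div_le_div₀ (le_trans hdmin.le hdd) h2 hdmin h1
      _ = (dmax / dmin) ^ d := by rw [Finset.prod_const, hcard]
  calc |H.eval z| = |∑ i : Fin (d + 1),
        H.eval (y i) * (Lagrange.basis Finset.univ y i).eval z| := by
        conv_lhs => rw [key]
        rw [Lagrange.interpolate_apply, Polynomial.eval_finset_sum]
        simp [Polynomial.eval_mul]
    _ ≤ ∑ i : Fin (d + 1), |H.eval (y i) * (Lagrange.basis Finset.univ y i).eval z| :=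
        Finset.abs_sum_le_sum_abs _ _
    _ ≤ ∑ i : Fin (d + 1), |H.eval (y i)| * (dmax / dmin) ^ d := by
        apply Finset.sum_le_sum
        intro i _
        rw [abs_mul]
        exact mul_le_mul_of_nonneg_left (hbasis i) (abs_nonneg _)
    _ = (dmax / dmin) ^ d * ∑ j : Fin (d + 1), |H.eval (y j)| := by
        rw [Finset.mul_sum]; simp [mul_comm]
end

section
/- Let T ≥ 2 be an integer and let R_1, ..., R_T, S_1, ..., S_T be mutually independent real-valued random variables, each with zero mean, with E[R_1^2] = E[S_1^2] = σ^2 and E[R_t^2] = E[S_t^2] = 1 for 2 ≤ t ≤ T. Fix a real number x and define r = (∑_{t=1}^{T−1} R_{t+1} x^t)·(∑_{t=1}^{T−1} S_{t+1} x^t), s = ∑_{t=1}^{T−1} (R_{t+1} S_1 + R_1 S_{t+1}) x^{T+t}, and u = R_1 S_1 x^{2T}. Then for all real β > 0 and real n ≥ 1, P(|r + s·n^{−1/2} + u·n^{−1}| ≥ n^{β}) ≤ 9 n^{−2β} [ ∑_{t=2}^{T} (t−1) x^{2t} + ∑_{t=T+1}^{2T−2} (2T−1−t) x^{2t} + n^{−1}·2σ^2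 ∑_{t=1}^{T−1} x^{2(T+t)} + n^{−2}·σ^4 x^{4T} ]. -/
open MeasureTheory ProbabilityTheory Finset

section Helpers

variable {Ω : Type*} [MeasurableSpace Ω] {μ : Measure Ω}

lemma ptb_sq_sum_geom (y : ℝ) : ∀ m : ℕ, 1 ≤ m →
    (∑ t ∈ Icc 1 m, y ^ t) ^ 2
      = ∑ t ∈ Icc 2 (m + 1), ((t : ℝ) - 1) * y ^ t
        + ∑ t ∈ Icc (m + 2) (2 * m), (2 * (m : ℝ) + 1 - (t : ℝ)) * y ^ t := by
  intro m hm
  induction m, hm using Nat.le_induction with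
  | base => norm_num
  | succ m hm ih =>
    have h1 : ∑ t ∈ Icc 1 (m + 1), y ^ t = (∑ t ∈ Icc 1 m, y ^ t) + y ^ (m + 1) :=
      sum_Icc_succ_top (by omega) _
    have hP : ∑ t ∈ Icc 2 (m + 1 + 1), ((t : ℝ) - 1) * y ^ t
        = (∑ t ∈ Icc 2 (m + 1), ((t : ℝ) - 1) * y ^ t) + ((m : ℝ) + 1) * y ^ (m + 2) := by
      rw [sum_Icc_succ_top (by omega)]
      push_cast; ring
    rw [h1, add_sq, ih, hP,
      show m + 1 + 2 = m + 3 from by omega,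
      show 2 * (m + 1) = 2 * m + 1 + 1 from by omega,
      sum_Icc_succ_top (show m + 3 ≤ 2 * m + 1 + 1 by omega)]
    push_cast
    rcases Nat.lt_or_ge m 2 with hm2 | hm2
    · interval_cases m
      · norm_num [Finset.sum_Icc_succ_top]
        ring
    · have hshift : ∑ t ∈ Icc (m + 2) (2 * m + 1), y ^ t
          = ∑ t ∈ Icc 1 m, y ^ (m + 1 + t) := by
        have : Icc (m + 2) (2 * m + 1) = (Icc 1 m).map (addLeftEmbedding (m + 1)) := by
          rw [map_add_left_Icc]; congr 1 <;> omega
        rw [this, Finset.sum_map]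
        rfl
      have hmid : (∑ t ∈ Icc 1 m, y ^ t) * y ^ (m + 1)
          = y ^ (m + 2) + ∑ t ∈ Icc (m + 3) (2 * m + 1), y ^ t := by
        have e1 : ∑ t ∈ Icc (m + 2) (2 * m + 1), y ^ t
            = y ^ (m + 2) + ∑ t ∈ Icc (m + 3) (2 * m + 1), y ^ t := by
          rw [← Finset.Ico_add_one_right_eq_Icc, Finset.sum_eq_sum_Ico_succ_bot (by omega),
            Finset.Ico_add_one_right_eq_Icc]
        rw [← e1, hshift, Finset.sum_mul]
        exact Finset.sum_congr rfl fun t _ => by ring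
      have hQ0 : ∑ t ∈ Icc (m + 2) (2 * m), (2 * (m : ℝ) + 1 - (t : ℝ)) * y ^ t
          = ((m : ℝ) - 1) * y ^ (m + 2)
            + ∑ t ∈ Icc (m + 3) (2 * m + 1), (2 * (m : ℝ) + 1 - (t : ℝ)) * y ^ t := by
        have e2 : ∑ t ∈ Icc (m + 3) (2 * m + 1), (2 * (m : ℝ) + 1 - (t : ℝ)) * y ^ t
            = (∑ t ∈ Icc (m + 3) (2 * m), (2 * (m : ℝ) + 1 - (t : ℝ)) * y ^ t)
              + (2 * (m : ℝ) + 1 - (2 * (m : ℝ) + 1)) * y ^ (2 * m + 1) := by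
          rw [show 2 * m + 1 = (2 * m) + 1 from rfl, sum_Icc_succ_top (by omega)]
          push_cast; ring
        rw [e2, ← Finset.Ico_add_one_right_eq_Icc, Finset.sum_eq_sum_Ico_succ_bot (by omega),
          Finset.Ico_add_one_right_eq_Icc]
        push_cast; ring
      have hcomb : ∑ t ∈ Icc (m + 3) (2 * m + 1), (2 * (m : ℝ) + 1 - (t : ℝ)) * y ^ t
            + 2 * ∑ t ∈ Icc (m + 3) (2 * m + 1), y ^ t
          = ∑ t ∈ Icc (m + 3) (2 * m + 1), (2 * ((m : ℝ) + 1) + 1 - (t : ℝ)) * y ^ t := by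
        rw [Finset.mul_sum, ← Finset.sum_add_distrib]
        exact Finset.sum_congr rfl fun t _ => by ring
      rw [hQ0]
      linear_combination 2 * hmid + hcomb

lemma ptb_integral_sq_weighted_sum [IsProbabilityMeasure μ]
    (m : ℕ) (g : ℕ → Ω → ℝ) (w v : ℕ → ℝ)
    (hL2 : ∀ t ∈ Icc 1 m, MemLp (g t) 2 μ)
    (hmean : ∀ t ∈ Icc 1 m, (∫ ω, g t ω ∂μ) = 0)
    (hvar : ∀ t ∈ Icc 1 m, (∫ ω, (g t ω) ^ 2 ∂μ) = v t)
    (hind : ∀ t ∈ Icc 1 m, ∀ t' ∈ Icc 1 m, t ≠ t' → IndepFun (g t) (g t') μ) :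
    (∫ ω, (∑ t ∈ Icc 1 m, g t ω * w t) ^ 2 ∂μ) = ∑ t ∈ Icc 1 m, v t * w t ^ 2 := by
  set X : ℕ → Ω → ℝ := fun t ω => g t ω * w t with hX
  have hXL2 : ∀ t ∈ Icc 1 m, MemLp (X t) 2 μ := fun t ht => by
    simpa [hX, mul_comm] using (hL2 t ht).const_mul (w t)
  have hXind : Set.Pairwise ↑(Icc 1 m) fun i j => IndepFun (X i) (X j) μ := by
    intro i hi j hj hij
    exact (hind i (by simpa using hi) j (by simpa using hj) hij).comp
      (measurable_mul_const (w i)) (measurable_mul_const (w j))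
  have hmeanX : ∀ t ∈ Icc 1 m, (∫ ω, X t ω ∂μ) = 0 := fun t ht => by
    simp [hX, integral_mul_const, hmean t ht]
  have hsum_mean : (∫ ω, ∑ t ∈ Icc 1 m, X t ω ∂μ) = 0 := by
    rw [integral_finset_sum _ fun t ht => (hXL2 t ht).integrable one_le_two]
    exact Finset.sum_eq_zero hmeanX
  have hvs := IndepFun.variance_sum (μ := μ) hXL2 hXind
  have hMem : MemLp (∑ i ∈ Icc 1 m, X i) 2 μ := memLp_finset_sum' _ hXL2
  rw [variance_eq_sub hMem] at hvs
  have h0 : ∀ ω, (∑ i ∈ Icc 1 m, X i) ω = ∑ t ∈ Icc 1 m, X t ω := fun ω => by simp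
  have hsum_mean' : (∫ ω, (∑ i ∈ Icc 1 m, X i) ω ∂μ) = 0 := by
    simp only [h0]; exact hsum_mean
  rw [hsum_mean'] at hvs
  have e1 : (∫ ω, (∑ t ∈ Icc 1 m, g t ω * w t) ^ 2 ∂μ)
      = (∫ ω, ((∑ i ∈ Icc 1 m, X i) ω) ^ 2 ∂μ) := by
    congr 1; funext ω; rw [h0]
  rw [e1]
  have e2 : (∫ ω, ((∑ i ∈ Icc 1 m, X i) ω) ^ 2 ∂μ) = ∑ t ∈ Icc 1 m, variance (X t) μ := by
    rw [← hvs]; simp only [Pi.pow_apply]; ring_nf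
  rw [e2]
  refine Finset.sum_congr rfl fun t ht => ?_
  rw [variance_eq_sub (hXL2 t ht), hmeanX t ht]
  simp only [hX, Pi.pow_apply, mul_pow]
  rw [integral_mul_const, hvar t ht]
  ring

lemma ptb_indep_comp_finsets {ι : Type*}
    {f : ι → Ω → ℝ} (hf : ∀ i, Measurable (f i))
    (hi : iIndepFun f μ) (s t : Finset ι) (hst : Disjoint s t)
    {F G : Ω → ℝ} (gF : ((i : s) → ℝ) → ℝ) (gG : ((i : t) → ℝ) → ℝ)
    (hgF : Measurable gF) (hgG : Measurable gG)
    (hF : F = fun ω => gF (fun i => f i ω)) (hG : G = fun ω => gG (fun i => f i ω)) :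
    IndepFun F G μ := by
  subst hF hG
  exact (hi.indepFun_finset s t hst hf).comp hgF hgG

lemma ptb_memℒp_mul_const {f : Ω → ℝ} (h : MemLp f 2 μ) (c : ℝ) :
    MemLp (fun ω => f ω * c) 2 μ := by
  simpa [mul_comm] using h.const_mul c

end Helpers

set_option maxHeartbeats 2000000 in
/-- Tail bound for the perturbation term
`r + s n^{-1/2} + u n^{-1}`: for all `β > 0` and real `n ≥ 1`,
`P(|r + s n^{-1/2} + u n^{-1}| ≥ n^β) ≤ 9 n^{-2β} [∑_{t=2}^{T} (t-1) x^{2t}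
+ ∑_{t=T+1}^{2T-2} (2T-1-t) x^{2t} + n^{-1}·2σ² ∑_{t=1}^{T-1} x^{2(T+t)}
+ n^{-2}·σ⁴ x^{4T}]`. -/
theorem perturbation_tail_bound {Ω : Type*} [MeasurableSpace Ω]
    (μ : Measure Ω) [IsProbabilityMeasure μ]
    (T : ℕ) (hT : 2 ≤ T) (σ x : ℝ)
    (R S : ℕ → Ω → ℝ)
    (hmeas : ∀ t ∈ Finset.Icc 1 T, Measurable (R t) ∧ Measurable (S t))
    (hL2 : ∀ t ∈ Finset.Icc 1 T, MemLp (R t) 2 μ ∧ MemLp (S t) 2 μ)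
    (hindep : iIndepFun
      (Sum.elim (fun j : Fin T => R ((j : ℕ) + 1)) (fun j : Fin T => S ((j : ℕ) + 1))) μ)
    (hmean : ∀ t ∈ Finset.Icc 1 T, (∫ ω, R t ω ∂μ) = 0 ∧ (∫ ω, S t ω ∂μ) = 0)
    (hvar1 : (∫ ω, (R 1 ω) ^ 2 ∂μ) = σ ^ 2 ∧ (∫ ω, (S 1 ω) ^ 2 ∂μ) = σ ^ 2)
    (hvar : ∀ t ∈ Finset.Icc 2 T, (∫ ω, (R t ω) ^ 2 ∂μ) = 1 ∧ (∫ ω, (S t ω) ^ 2 ∂μ) = 1)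
    (r s u : Ω → ℝ)
    (hr : r = fun ω => (∑ t ∈ Finset.Icc 1 (T - 1), R (t + 1) ω * x ^ t) *
                       (∑ t ∈ Finset.Icc 1 (T - 1), S (t + 1) ω * x ^ t))
    (hs : s = fun ω => ∑ t ∈ Finset.Icc 1 (T - 1),
              (R (t + 1) ω * S 1 ω + R 1 ω * S (t + 1) ω) * x ^ (T + t))
    (hu : u = fun ω => R 1 ω * S 1 ω * x ^ (2 * T))
    (β n : ℝ) (hβ : 0 < β) (hn : 1 ≤ n) :
    (μ {ω | n ^ β ≤ |r ω + s ω * n ^ (-(1 : ℝ) / 2) + u ω * n ^ (-(1 : ℝ))|}).toReal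
      ≤ 9 * n ^ (-(2 * β)) *
        ((∑ t ∈ Finset.Icc 2 T, ((t : ℝ) - 1) * x ^ (2 * t))
          + (∑ t ∈ Finset.Icc (T + 1) (2 * T - 2),
              (2 * (T : ℝ) - 1 - (t : ℝ)) * x ^ (2 * t))
          + n ^ (-(1 : ℝ)) * (2 * σ ^ 2 * ∑ t ∈ Finset.Icc 1 (T - 1), x ^ (2 * (T + t)))
          + n ^ (-(2 : ℝ)) * (σ ^ 4 * x ^ (4 * T))) := by
  classical
  have hn0 : (0 : ℝ) < n := lt_of_lt_of_le one_pos hn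
  -- basic membership facts
  have h1T : (1 : ℕ) ∈ Finset.Icc 1 T := Finset.mem_Icc.mpr ⟨le_refl _, by omega⟩
  have hmemT : ∀ t ∈ Icc 1 (T - 1), t + 1 ∈ Finset.Icc 1 T := fun t ht => by
    have := Finset.mem_Icc.mp ht; exact Finset.mem_Icc.mpr ⟨by omega, by omega⟩
  have hmem2T : ∀ t ∈ Icc 1 (T - 1), t + 1 ∈ Finset.Icc 2 T := fun t ht => by
    have := Finset.mem_Icc.mp ht; exact Finset.mem_Icc.mpr ⟨by omega, by omega⟩
  -- the underlying independent family
  set f : Sum (Fin T) (Fin T) → Ω → ℝ :=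
    Sum.elim (fun j : Fin T => R ((j : ℕ) + 1)) (fun j : Fin T => S ((j : ℕ) + 1)) with hfdef
  have hmf : ∀ i, Measurable (f i) := by
    rintro (j | j)
    · exact (hmeas (j + 1) (Finset.mem_Icc.mpr ⟨by omega, by have := j.isLt; omega⟩)).1
    · exact (hmeas (j + 1) (Finset.mem_Icc.mpr ⟨by omega, by have := j.isLt; omega⟩)).2
  have hindep' : iIndepFun f μ := hindep
  set iz : Fin T := ⟨0, by omega⟩ with hiz
  -- composite variables
  set A : Ω → ℝ := fun ω => ∑ t ∈ Icc 1 (T - 1), R (t + 1) ω * x ^ t with hA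
  set B : Ω → ℝ := fun ω => ∑ t ∈ Icc 1 (T - 1), S (t + 1) ω * x ^ t with hB
  set A' : Ω → ℝ := fun ω => ∑ t ∈ Icc 1 (T - 1), R (t + 1) ω * x ^ (T + t) with hA'
  set B' : Ω → ℝ := fun ω => ∑ t ∈ Icc 1 (T - 1), S (t + 1) ω * x ^ (T + t) with hB'
  have hrAB : r = fun ω => A ω * B ω := hr
  have hsab : s = fun ω => S 1 ω * A' ω + R 1 ω * B' ω := by
    rw [hs]; funext ω
    rw [hA', hB', Finset.mul_sum, Finset.mul_sum, ← Finset.sum_add_distrib]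
    exact Finset.sum_congr rfl fun t _ => by ring
  -- measurability of composite variables
  have hmR1 : Measurable (R 1) := (hmeas 1 h1T).1
  have hmS1 : Measurable (S 1) := (hmeas 1 h1T).2
  have hR1L2 : MemLp (R 1) 2 μ := (hL2 1 h1T).1
  have hS1L2 : MemLp (S 1) 2 μ := (hL2 1 h1T).2
  have hmA : Measurable A := by
    rw [hA]; exact Finset.measurable_sum _ fun t ht => ((hmeas _ (hmemT t ht)).1.mul_const _)
  have hmB : Measurable B := by
    rw [hB]; exact Finset.measurable_sum _ fun t ht => ((hmeas _ (hmemT t ht)).2.mul_const _)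
  have hmA' : Measurable A' := by
    rw [hA']; exact Finset.measurable_sum _ fun t ht => ((hmeas _ (hmemT t ht)).1.mul_const _)
  have hmB' : Measurable B' := by
    rw [hB']; exact Finset.measurable_sum _ fun t ht => ((hmeas _ (hmemT t ht)).2.mul_const _)
  have hAL2 : MemLp A 2 μ := by
    rw [hA]; exact memLp_finset_sum _ fun t ht => ptb_memℒp_mul_const ((hL2 _ (hmemT t ht)).1) _
  have hBL2 : MemLp B 2 μ := by
    rw [hB]; exact memLp_finset_sum _ fun t ht => ptb_memℒp_mul_const ((hL2 _ (hmemT t ht)).2) _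
  have hA'L2 : MemLp A' 2 μ := by
    rw [hA']; exact memLp_finset_sum _ fun t ht => ptb_memℒp_mul_const ((hL2 _ (hmemT t ht)).1) _
  have hB'L2 : MemLp B' 2 μ := by
    rw [hB']; exact memLp_finset_sum _ fun t ht => ptb_memℒp_mul_const ((hL2 _ (hmemT t ht)).2) _
  -- independence facts
  have hAB : IndepFun A B μ := by
    refine ptb_indep_comp_finsets hmf hindep'
      (Finset.univ.map ⟨Sum.inl, Sum.inl_injective⟩)
      (Finset.univ.map ⟨Sum.inr, Sum.inr_injective⟩)
      (by simp [Finset.disjoint_left])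
      (fun v => ∑ t ∈ (Icc 1 (T - 1)).attach,
        v ⟨Sum.inl ⟨t.1, by have := Finset.mem_Icc.mp t.2; omega⟩,
          Finset.mem_map_of_mem _ (Finset.mem_univ _)⟩ * x ^ (t.1 : ℕ))
      (fun v => ∑ t ∈ (Icc 1 (T - 1)).attach,
        v ⟨Sum.inr ⟨t.1, by have := Finset.mem_Icc.mp t.2; omega⟩,
          Finset.mem_map_of_mem _ (Finset.mem_univ _)⟩ * x ^ (t.1 : ℕ))
      (Finset.measurable_sum _ fun t _ => (measurable_pi_apply _).mul_const _)
      (Finset.measurable_sum _ fun t _ => (measurable_pi_apply _).mul_const _)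
      ?_ ?_
    · rw [hA]; exact funext fun ω => (Finset.sum_attach _ fun t => R (t + 1) ω * x ^ t).symm
    · rw [hB]; exact funext fun ω => (Finset.sum_attach _ fun t => S (t + 1) ω * x ^ t).symm
  have hA'B' : IndepFun A' B' μ := by
    refine ptb_indep_comp_finsets hmf hindep'
      (Finset.univ.map ⟨Sum.inl, Sum.inl_injective⟩)
      (Finset.univ.map ⟨Sum.inr, Sum.inr_injective⟩)
      (by simp [Finset.disjoint_left])
      (fun v => ∑ t ∈ (Icc 1 (T - 1)).attach,
        v ⟨Sum.inl ⟨t.1, by have := Finset.mem_Icc.mp t.2; omega⟩,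
          Finset.mem_map_of_mem _ (Finset.mem_univ _)⟩ * x ^ (T + (t.1 : ℕ)))
      (fun v => ∑ t ∈ (Icc 1 (T - 1)).attach,
        v ⟨Sum.inr ⟨t.1, by have := Finset.mem_Icc.mp t.2; omega⟩,
          Finset.mem_map_of_mem _ (Finset.mem_univ _)⟩ * x ^ (T + (t.1 : ℕ)))
      (Finset.measurable_sum _ fun t _ => (measurable_pi_apply _).mul_const _)
      (Finset.measurable_sum _ fun t _ => (measurable_pi_apply _).mul_const _)
      ?_ ?_
    · rw [hA']; exact funext fun ω => (Finset.sum_attach _ fun t => R (t + 1) ω * x ^ (T + t)).symm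
    · rw [hB']; exact funext fun ω => (Finset.sum_attach _ fun t => S (t + 1) ω * x ^ (T + t)).symm
  have hS1A' : IndepFun (S 1) A' μ := by
    refine ptb_indep_comp_finsets hmf hindep'
      {Sum.inr iz} (Finset.univ.map ⟨Sum.inl, Sum.inl_injective⟩)
      (by simp [Finset.disjoint_left])
      (fun v => v ⟨Sum.inr iz, Finset.mem_singleton_self _⟩)
      (fun v => ∑ t ∈ (Icc 1 (T - 1)).attach,
        v ⟨Sum.inl ⟨t.1, by have := Finset.mem_Icc.mp t.2; omega⟩,
          Finset.mem_map_of_mem _ (Finset.mem_univ _)⟩ * x ^ (T + (t.1 : ℕ)))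
      (measurable_pi_apply _)
      (Finset.measurable_sum _ fun t _ => (measurable_pi_apply _).mul_const _)
      rfl ?_
    · rw [hA']; exact funext fun ω => (Finset.sum_attach _ fun t => R (t + 1) ω * x ^ (T + t)).symm
  have hR1B' : IndepFun (R 1) B' μ := by
    refine ptb_indep_comp_finsets hmf hindep'
      {Sum.inl iz} (Finset.univ.map ⟨Sum.inr, Sum.inr_injective⟩)
      (by simp [Finset.disjoint_left])
      (fun v => v ⟨Sum.inl iz, Finset.mem_singleton_self _⟩)
      (fun v => ∑ t ∈ (Icc 1 (T - 1)).attach,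
        v ⟨Sum.inr ⟨t.1, by have := Finset.mem_Icc.mp t.2; omega⟩,
          Finset.mem_map_of_mem _ (Finset.mem_univ _)⟩ * x ^ (T + (t.1 : ℕ)))
      (measurable_pi_apply _)
      (Finset.measurable_sum _ fun t _ => (measurable_pi_apply _).mul_const _)
      rfl ?_
    · rw [hB']; exact funext fun ω => (Finset.sum_attach _ fun t => S (t + 1) ω * x ^ (T + t)).symm
  have hR1S1 : IndepFun (R 1) (S 1) μ :=
    hindep'.indepFun (show (Sum.inl iz : Sum (Fin T) (Fin T)) ≠ Sum.inr iz by simp)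
  have hab : IndepFun (fun ω => S 1 ω * A' ω) (fun ω => R 1 ω * B' ω) μ := by
    refine ptb_indep_comp_finsets hmf hindep'
      (insert (Sum.inr iz) ((Finset.univ.map ⟨Sum.inl, Sum.inl_injective⟩).erase (Sum.inl iz)))
      (insert (Sum.inl iz) ((Finset.univ.map ⟨Sum.inr, Sum.inr_injective⟩).erase (Sum.inr iz)))
      ?_
      (fun v => v ⟨Sum.inr iz, Finset.mem_insert_self _ _⟩ * ∑ t ∈ (Icc 1 (T - 1)).attach,
        v ⟨Sum.inl ⟨t.1, by have := Finset.mem_Icc.mp t.2; omega⟩,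
          Finset.mem_insert_of_mem (Finset.mem_erase.mpr
            ⟨by have := Finset.mem_Icc.mp t.2; simp only [ne_eq, Sum.inl.injEq, Fin.mk.injEq, hiz]; omega,
             Finset.mem_map_of_mem _ (Finset.mem_univ _)⟩)⟩ * x ^ (T + (t.1 : ℕ)))
      (fun v => v ⟨Sum.inl iz, Finset.mem_insert_self _ _⟩ * ∑ t ∈ (Icc 1 (T - 1)).attach,
        v ⟨Sum.inr ⟨t.1, by have := Finset.mem_Icc.mp t.2; omega⟩,
          Finset.mem_insert_of_mem (Finset.mem_erase.mpr
            ⟨by have := Finset.mem_Icc.mp t.2; simp only [ne_eq, Sum.inr.injEq, Fin.mk.injEq, hiz]; omega,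
             Finset.mem_map_of_mem _ (Finset.mem_univ _)⟩)⟩ * x ^ (T + (t.1 : ℕ)))
      ((measurable_pi_apply _).mul
        (Finset.measurable_sum _ fun t _ => (measurable_pi_apply _).mul_const _))
      ((measurable_pi_apply _).mul
        (Finset.measurable_sum _ fun t _ => (measurable_pi_apply _).mul_const _))
      ?_ ?_
    · rw [Finset.disjoint_left]
      rintro a ha hb
      simp only [Finset.mem_insert, Finset.mem_erase, Finset.mem_map, Finset.mem_univ,
        Function.Embedding.coeFn_mk, true_and, ne_eq] at ha hb
      rcases ha with rfl | ⟨hne, j, rfl⟩ <;> rcases hb with h | ⟨hne', j', h'⟩ <;> simp_all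
    · rw [hA']
      exact funext fun ω =>
        congrArg (fun z => S 1 ω * z) (Finset.sum_attach _ fun t => R (t + 1) ω * x ^ (T + t)).symm
    · rw [hB']
      exact funext fun ω =>
        congrArg (fun z => R 1 ω * z) (Finset.sum_attach _ fun t => S (t + 1) ω * x ^ (T + t)).symm
  -- pairwise independence within coordinates
  have hindR : ∀ t ∈ Icc 1 (T - 1), ∀ t' ∈ Icc 1 (T - 1), t ≠ t' →
      IndepFun (R (t + 1)) (R (t' + 1)) μ := by
    intro t ht t' ht' hne
    have h1 := Finset.mem_Icc.mp ht
    have h2 := Finset.mem_Icc.mp ht'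
    exact hindep'.indepFun (i := Sum.inl ⟨t, by omega⟩) (j := Sum.inl ⟨t', by omega⟩)
      (by simp only [ne_eq, Sum.inl.injEq, Fin.mk.injEq]; exact hne)
  have hindS : ∀ t ∈ Icc 1 (T - 1), ∀ t' ∈ Icc 1 (T - 1), t ≠ t' →
      IndepFun (S (t + 1)) (S (t' + 1)) μ := by
    intro t ht t' ht' hne
    have h1 := Finset.mem_Icc.mp ht
    have h2 := Finset.mem_Icc.mp ht'
    exact hindep'.indepFun (i := Sum.inr ⟨t, by omega⟩) (j := Sum.inr ⟨t', by omega⟩)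
      (by simp only [ne_eq, Sum.inr.injEq, Fin.mk.injEq]; exact hne)
  -- second moments of the composite sums
  have hEA : (∫ ω, A ω ^ 2 ∂μ) = ∑ t ∈ Icc 1 (T - 1), (x ^ 2) ^ t := by
    simp only [hA]
    rw [ptb_integral_sq_weighted_sum (μ := μ) (T - 1) (fun t => R (t + 1)) (fun t => x ^ t)
      (fun _ => 1) (fun t ht => (hL2 _ (hmemT t ht)).1) (fun t ht => (hmean _ (hmemT t ht)).1)
      (fun t ht => (hvar _ (hmem2T t ht)).1) hindR]
    exact Finset.sum_congr rfl fun t _ => by rw [one_mul, pow_right_comm]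
  have hEB : (∫ ω, B ω ^ 2 ∂μ) = ∑ t ∈ Icc 1 (T - 1), (x ^ 2) ^ t := by
    simp only [hB]
    rw [ptb_integral_sq_weighted_sum (μ := μ) (T - 1) (fun t => S (t + 1)) (fun t => x ^ t)
      (fun _ => 1) (fun t ht => (hL2 _ (hmemT t ht)).2) (fun t ht => (hmean _ (hmemT t ht)).2)
      (fun t ht => (hvar _ (hmem2T t ht)).2) hindS]
    exact Finset.sum_congr rfl fun t _ => by rw [one_mul, pow_right_comm]
  have hEA' : (∫ ω, A' ω ^ 2 ∂μ) = ∑ t ∈ Icc 1 (T - 1), x ^ (2 * (T + t)) := by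
    simp only [hA']
    rw [ptb_integral_sq_weighted_sum (μ := μ) (T - 1) (fun t => R (t + 1))
      (fun t => x ^ (T + t)) (fun _ => 1) (fun t ht => (hL2 _ (hmemT t ht)).1)
      (fun t ht => (hmean _ (hmemT t ht)).1) (fun t ht => (hvar _ (hmem2T t ht)).1) hindR]
    refine Finset.sum_congr rfl fun t _ => ?_
    rw [one_mul, ← pow_mul]; congr 1; omega
  have hEB' : (∫ ω, B' ω ^ 2 ∂μ) = ∑ t ∈ Icc 1 (T - 1), x ^ (2 * (T + t)) := by
    simp only [hB']
    rw [ptb_integral_sq_weighted_sum (μ := μ) (T - 1) (fun t => S (t + 1))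
      (fun t => x ^ (T + t)) (fun _ => 1) (fun t ht => (hL2 _ (hmemT t ht)).2)
      (fun t ht => (hmean _ (hmemT t ht)).2) (fun t ht => (hvar _ (hmem2T t ht)).2) hindS]
    refine Finset.sum_congr rfl fun t _ => ?_
    rw [one_mul, ← pow_mul]; congr 1; omega
  -- integrability of the squares
  have hA2int : Integrable (fun ω => A ω ^ 2) μ := hAL2.integrable_sq
  have hB2int : Integrable (fun ω => B ω ^ 2) μ := hBL2.integrable_sq
  have hA'2int : Integrable (fun ω => A' ω ^ 2) μ := hA'L2.integrable_sq
  have hB'2int : Integrable (fun ω => B' ω ^ 2) μ := hB'L2.integrable_sq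
  have hR1sq : Integrable (fun ω => R 1 ω ^ 2) μ := hR1L2.integrable_sq
  have hS1sq : Integrable (fun ω => S 1 ω ^ 2) μ := hS1L2.integrable_sq
  have hABsq : IndepFun (fun ω => A ω ^ 2) (fun ω => B ω ^ 2) μ :=
    hAB.comp (measurable_id.pow_const 2) (measurable_id.pow_const 2)
  have hS1A'sq : IndepFun (fun ω => S 1 ω ^ 2) (fun ω => A' ω ^ 2) μ :=
    hS1A'.comp (measurable_id.pow_const 2) (measurable_id.pow_const 2)
  have hR1B'sq : IndepFun (fun ω => R 1 ω ^ 2) (fun ω => B' ω ^ 2) μ :=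
    hR1B'.comp (measurable_id.pow_const 2) (measurable_id.pow_const 2)
  have hR1S1sq : IndepFun (fun ω => R 1 ω ^ 2) (fun ω => S 1 ω ^ 2) μ :=
    hR1S1.comp (measurable_id.pow_const 2) (measurable_id.pow_const 2)
  have hA2B2int : Integrable (fun ω => A ω ^ 2 * B ω ^ 2) μ := hABsq.integrable_mul hA2int hB2int
  have hS1A'2int : Integrable (fun ω => S 1 ω ^ 2 * A' ω ^ 2) μ :=
    hS1A'sq.integrable_mul hS1sq hA'2int
  have hR1B'2int : Integrable (fun ω => R 1 ω ^ 2 * B' ω ^ 2) μ :=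
    hR1B'sq.integrable_mul hR1sq hB'2int
  have hR1S1int : Integrable (fun ω => R 1 ω ^ 2 * S 1 ω ^ 2) μ :=
    hR1S1sq.integrable_mul hR1sq hS1sq
  -- L² membership of r, s, u
  have haL2 : MemLp (fun ω => S 1 ω * A' ω) 2 μ := by
    refine (memLp_two_iff_integrable_sq (hmS1.mul hmA').aestronglyMeasurable).mpr ?_
    simpa only [Pi.mul_apply, mul_pow] using hS1A'2int
  have hbL2 : MemLp (fun ω => R 1 ω * B' ω) 2 μ := by
    refine (memLp_two_iff_integrable_sq (hmR1.mul hmB').aestronglyMeasurable).mpr ?_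
    simpa only [Pi.mul_apply, mul_pow] using hR1B'2int
  have hrL2 : MemLp r 2 μ := by
    rw [hrAB]
    refine (memLp_two_iff_integrable_sq (hmA.mul hmB).aestronglyMeasurable).mpr ?_
    simpa only [Pi.mul_apply, mul_pow] using hA2B2int
  have hsL2 : MemLp s 2 μ := by
    rw [hsab]
    exact haL2.add hbL2
  have huL2 : MemLp u 2 μ := by
    rw [hu]
    refine ptb_memℒp_mul_const ?_ _
    refine (memLp_two_iff_integrable_sq (hmR1.mul hmS1).aestronglyMeasurable).mpr ?_
    simpa only [Pi.mul_apply, mul_pow] using hR1S1int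
  have haint : Integrable (fun ω => S 1 ω * A' ω) μ := haL2.integrable one_le_two
  have hbint : Integrable (fun ω => R 1 ω * B' ω) μ := hbL2.integrable one_le_two
  have ha2int : Integrable (fun ω => (S 1 ω * A' ω) ^ 2) μ := haL2.integrable_sq
  have hb2int : Integrable (fun ω => (R 1 ω * B' ω) ^ 2) μ := hbL2.integrable_sq
  have habint : Integrable (fun ω => (S 1 ω * A' ω) * (R 1 ω * B' ω)) μ :=
    hab.integrable_mul haint hbint
  -- the three expectations
  have hEr : (∫ ω, r ω ^ 2 ∂μ)
      = (∑ t ∈ Finset.Icc 2 T, ((t : ℝ) - 1) * x ^ (2 * t))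
        + (∑ t ∈ Finset.Icc (T + 1) (2 * T - 2), (2 * (T : ℝ) - 1 - (t : ℝ)) * x ^ (2 * t)) := by
    have h1 : (∫ ω, r ω ^ 2 ∂μ) = (∫ ω, A ω ^ 2 ∂μ) * (∫ ω, B ω ^ 2 ∂μ) := by
      have h := hABsq.integral_mul_eq_mul_integral hA2int.aestronglyMeasurable hB2int.aestronglyMeasurable
      rw [hrAB]
      simpa only [Pi.mul_apply, mul_pow] using h
    have hgeom := ptb_sq_sum_geom (x ^ 2) (T - 1) (by omega)
    rw [show T - 1 + 1 = T from by omega, show T - 1 + 2 = T + 1 from by omega,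
      show 2 * (T - 1) = 2 * T - 2 from by omega] at hgeom
    rw [h1, hEA, hEB, ← pow_two, hgeom]
    congr 1
    · exact Finset.sum_congr rfl fun t _ => by rw [pow_mul]
    · refine Finset.sum_congr rfl fun t _ => ?_
      rw [pow_mul]
      push_cast [Nat.cast_sub (show 1 ≤ T from by omega)]
      ring
  have hEs : (∫ ω, s ω ^ 2 ∂μ)
      = 2 * σ ^ 2 * ∑ t ∈ Finset.Icc 1 (T - 1), x ^ (2 * (T + t)) := by
    have hexp : (fun ω => s ω ^ 2) = fun ω => (S 1 ω * A' ω) ^ 2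
        + (2 * ((S 1 ω * A' ω) * (R 1 ω * B' ω)) + (R 1 ω * B' ω) ^ 2) := by
      rw [hsab]; funext ω; ring
    have h2ab : Integrable (fun ω => 2 * (S 1 ω * A' ω * (R 1 ω * B' ω))) μ :=
      habint.const_mul 2
    have hsum2 : Integrable
        (fun ω => 2 * (S 1 ω * A' ω * (R 1 ω * B' ω)) + (R 1 ω * B' ω) ^ 2) μ :=
      h2ab.add hb2int
    rw [hexp, integral_add ha2int hsum2, integral_add h2ab hb2int, integral_const_mul]
    have hEab : (∫ ω, (S 1 ω * A' ω) * (R 1 ω * B' ω) ∂μ) = 0 := by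
      have h : (∫ ω, (S 1 ω * A' ω) * (R 1 ω * B' ω) ∂μ)
          = (∫ ω, S 1 ω * A' ω ∂μ) * (∫ ω, R 1 ω * B' ω ∂μ) :=
        hab.integral_mul_eq_mul_integral haint.aestronglyMeasurable hbint.aestronglyMeasurable
      have ha0 : (∫ ω, S 1 ω * A' ω ∂μ) = 0 := by
        have h2 : (∫ ω, S 1 ω * A' ω ∂μ) = (∫ ω, S 1 ω ∂μ) * (∫ ω, A' ω ∂μ) :=
          hS1A'.integral_mul_eq_mul_integral (hS1L2.integrable one_le_two).aestronglyMeasurable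
            (hA'L2.integrable one_le_two).aestronglyMeasurable
        rw [h2, (hmean 1 h1T).2, zero_mul]
      rw [h, ha0, zero_mul]
    have hEa2 : (∫ ω, (S 1 ω * A' ω) ^ 2 ∂μ)
        = σ ^ 2 * ∑ t ∈ Finset.Icc 1 (T - 1), x ^ (2 * (T + t)) := by
      have h : (∫ ω, S 1 ω ^ 2 * A' ω ^ 2 ∂μ)
          = (∫ ω, S 1 ω ^ 2 ∂μ) * (∫ ω, A' ω ^ 2 ∂μ) :=
        hS1A'sq.integral_mul_eq_mul_integral hS1sq.aestronglyMeasurable hA'2int.aestronglyMeasurable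
      calc (∫ ω, (S 1 ω * A' ω) ^ 2 ∂μ) = (∫ ω, S 1 ω ^ 2 * A' ω ^ 2 ∂μ) := by
            congr 1; funext ω; ring
        _ = (∫ ω, S 1 ω ^ 2 ∂μ) * (∫ ω, A' ω ^ 2 ∂μ) := h
        _ = σ ^ 2 * ∑ t ∈ Finset.Icc 1 (T - 1), x ^ (2 * (T + t)) := by rw [hvar1.2, hEA']
    have hEb2 : (∫ ω, (R 1 ω * B' ω) ^ 2 ∂μ)
        = σ ^ 2 * ∑ t ∈ Finset.Icc 1 (T - 1), x ^ (2 * (T + t)) := by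
      have h : (∫ ω, R 1 ω ^ 2 * B' ω ^ 2 ∂μ)
          = (∫ ω, R 1 ω ^ 2 ∂μ) * (∫ ω, B' ω ^ 2 ∂μ) :=
        hR1B'sq.integral_mul_eq_mul_integral hR1sq.aestronglyMeasurable hB'2int.aestronglyMeasurable
      calc (∫ ω, (R 1 ω * B' ω) ^ 2 ∂μ) = (∫ ω, R 1 ω ^ 2 * B' ω ^ 2 ∂μ) := by
            congr 1; funext ω; ring
        _ = (∫ ω, R 1 ω ^ 2 ∂μ) * (∫ ω, B' ω ^ 2 ∂μ) := h
        _ = σ ^ 2 * ∑ t ∈ Finset.Icc 1 (T - 1), x ^ (2 * (T + t)) := by rw [hvar1.1, hEB']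
    rw [hEab, hEa2, hEb2]
    ring
  have hEu : (∫ ω, u ω ^ 2 ∂μ) = σ ^ 4 * x ^ (4 * T) := by
    have hexp : (fun ω => u ω ^ 2) = fun ω => (R 1 ω ^ 2 * S 1 ω ^ 2) * (x ^ (2 * T)) ^ 2 := by
      rw [hu]; funext ω; ring
    rw [hexp, integral_mul_const]
    have h : (∫ ω, R 1 ω ^ 2 * S 1 ω ^ 2 ∂μ)
        = (∫ ω, R 1 ω ^ 2 ∂μ) * (∫ ω, S 1 ω ^ 2 ∂μ) :=
      hR1S1sq.integral_mul_eq_mul_integral hR1sq.aestronglyMeasurable hS1sq.aestronglyMeasurable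
    rw [h, hvar1.1, hvar1.2, ← pow_mul, show 2 * T * 2 = 4 * T from by ring]
    ring
  -- combined second moment bound
  have hXL2 : MemLp (fun ω => r ω + s ω * n ^ (-(1 : ℝ) / 2) + u ω * n ^ (-(1 : ℝ))) 2 μ :=
    (hrL2.add (ptb_memℒp_mul_const hsL2 _)).add (ptb_memℒp_mul_const huL2 _)
  have hX2int : Integrable
      (fun ω => (r ω + s ω * n ^ (-(1 : ℝ) / 2) + u ω * n ^ (-(1 : ℝ))) ^ 2) μ :=
    hXL2.integrable_sq
  have hr2int : Integrable (fun ω => r ω ^ 2) μ := hrL2.integrable_sq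
  have hs2int : Integrable (fun ω => s ω ^ 2) μ := hsL2.integrable_sq
  have hu2int : Integrable (fun ω => u ω ^ 2) μ := huL2.integrable_sq
  have hRHSint : Integrable (fun ω => 3 * (r ω ^ 2 + s ω ^ 2 * (n ^ (-(1 : ℝ) / 2)) ^ 2
      + u ω ^ 2 * (n ^ (-(1 : ℝ))) ^ 2)) μ :=
    ((hr2int.add (hs2int.mul_const _)).add (hu2int.mul_const _)).const_mul 3
  have hmono : (∫ ω, (r ω + s ω * n ^ (-(1 : ℝ) / 2) + u ω * n ^ (-(1 : ℝ))) ^ 2 ∂μ)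
      ≤ ∫ ω, 3 * (r ω ^ 2 + s ω ^ 2 * (n ^ (-(1 : ℝ) / 2)) ^ 2
          + u ω ^ 2 * (n ^ (-(1 : ℝ))) ^ 2) ∂μ := by
    refine integral_mono hX2int hRHSint fun ω => ?_
    have h1 := sq_nonneg (r ω - s ω * n ^ (-(1 : ℝ) / 2))
    have h2 := sq_nonneg (r ω - u ω * n ^ (-(1 : ℝ)))
    have h3 := sq_nonneg (s ω * n ^ (-(1 : ℝ) / 2) - u ω * n ^ (-(1 : ℝ)))
    simp only
    nlinarith [sq_nonneg (s ω * n ^ (-(1 : ℝ) / 2)), sq_nonneg (u ω * n ^ (-(1 : ℝ)))]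
  have hRHSval : (∫ ω, 3 * (r ω ^ 2 + s ω ^ 2 * (n ^ (-(1 : ℝ) / 2)) ^ 2
      + u ω ^ 2 * (n ^ (-(1 : ℝ))) ^ 2) ∂μ)
      = 3 * ((∫ ω, r ω ^ 2 ∂μ) + (∫ ω, s ω ^ 2 ∂μ) * (n ^ (-(1 : ℝ) / 2)) ^ 2
          + (∫ ω, u ω ^ 2 ∂μ) * (n ^ (-(1 : ℝ))) ^ 2) := by
    have hIs : Integrable (fun ω => s ω ^ 2 * (n ^ (-(1 : ℝ) / 2)) ^ 2) μ :=
      hs2int.mul_const _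
    have hIu : Integrable (fun ω => u ω ^ 2 * (n ^ (-(1 : ℝ))) ^ 2) μ :=
      hu2int.mul_const _
    have hI1 : Integrable (fun ω => r ω ^ 2 + s ω ^ 2 * (n ^ (-(1 : ℝ) / 2)) ^ 2) μ :=
      hr2int.add hIs
    rw [integral_const_mul, integral_add hI1 hIu, integral_add hr2int hIs,
      integral_mul_const, integral_mul_const]
  -- power identities
  have hc1 : (n ^ (-(1 : ℝ) / 2)) ^ 2 = n ^ (-(1 : ℝ)) := by
    rw [← Real.rpow_natCast (n ^ (-(1 : ℝ) / 2)) 2, ← Real.rpow_mul hn0.le]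
    norm_num
  have hc2 : (n ^ (-(1 : ℝ))) ^ 2 = n ^ (-(2 : ℝ)) := by
    rw [← Real.rpow_natCast (n ^ (-(1 : ℝ))) 2, ← Real.rpow_mul hn0.le]
    norm_num
  have hε : (0 : ℝ) < n ^ β := Real.rpow_pos_of_pos hn0 β
  have hpow : n ^ (-(2 * β)) = ((n ^ β) ^ 2)⁻¹ := by
    have h2 : ((n ^ β) ^ 2 : ℝ) = n ^ (2 * β) := by
      rw [← Real.rpow_natCast (n ^ β) 2, ← Real.rpow_mul hn0.le]
      norm_num [mul_comm]
    rw [h2, ← Real.rpow_neg hn0.le]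
  -- the bracket and its value
  set Btot : ℝ := (∑ t ∈ Finset.Icc 2 T, ((t : ℝ) - 1) * x ^ (2 * t))
      + (∑ t ∈ Finset.Icc (T + 1) (2 * T - 2), (2 * (T : ℝ) - 1 - (t : ℝ)) * x ^ (2 * t))
      + n ^ (-(1 : ℝ)) * (2 * σ ^ 2 * ∑ t ∈ Finset.Icc 1 (T - 1), x ^ (2 * (T + t)))
      + n ^ (-(2 : ℝ)) * (σ ^ 4 * x ^ (4 * T)) with hBtot
  have hBtotval : (∫ ω, r ω ^ 2 ∂μ) + (∫ ω, s ω ^ 2 ∂μ) * (n ^ (-(1 : ℝ) / 2)) ^ 2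
      + (∫ ω, u ω ^ 2 ∂μ) * (n ^ (-(1 : ℝ))) ^ 2 = Btot := by
    rw [hEr, hEs, hEu, hc1, hc2, hBtot]
    ring
  have hBtot_nonneg : 0 ≤ Btot := by
    rw [← hBtotval]
    have e1 : (0 : ℝ) ≤ ∫ ω, r ω ^ 2 ∂μ := integral_nonneg fun ω => sq_nonneg _
    have e2 : (0 : ℝ) ≤ ∫ ω, s ω ^ 2 ∂μ := integral_nonneg fun ω => sq_nonneg _
    have e3 : (0 : ℝ) ≤ ∫ ω, u ω ^ 2 ∂μ := integral_nonneg fun ω => sq_nonneg _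
    positivity
  -- Markov / Chebyshev step
  have hsetEq : {ω | n ^ β ≤ |r ω + s ω * n ^ (-(1 : ℝ) / 2) + u ω * n ^ (-(1 : ℝ))|}
      = {ω | (n ^ β) ^ 2
          ≤ (r ω + s ω * n ^ (-(1 : ℝ) / 2) + u ω * n ^ (-(1 : ℝ))) ^ 2} := by
    ext ω
    simp only [Set.mem_setOf_eq]
    constructor
    · intro h
      calc (n ^ β) ^ 2 ≤ |r ω + s ω * n ^ (-(1 : ℝ) / 2) + u ω * n ^ (-(1 : ℝ))| ^ 2 :=
            pow_le_pow_left₀ hε.le h 2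
        _ = _ := sq_abs _
    · intro h
      refine le_of_pow_le_pow_left₀ two_ne_zero (abs_nonneg _) ?_
      rw [sq_abs]
      exact h
  have hmar := mul_meas_ge_le_integral_of_nonneg (μ := μ)
    (f := fun ω => (r ω + s ω * n ^ (-(1 : ℝ) / 2) + u ω * n ^ (-(1 : ℝ))) ^ 2)
    (Filter.Eventually.of_forall fun ω => sq_nonneg _) hX2int ((n ^ β) ^ 2)
  calc (μ {ω | n ^ β ≤ |r ω + s ω * n ^ (-(1 : ℝ) / 2) + u ω * n ^ (-(1 : ℝ))|}).toReal
      = (μ {ω | (n ^ β) ^ 2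
          ≤ (r ω + s ω * n ^ (-(1 : ℝ) / 2) + u ω * n ^ (-(1 : ℝ))) ^ 2}).toReal := by
        rw [hsetEq]
    _ ≤ ((n ^ β) ^ 2)⁻¹
        * (∫ ω, (r ω + s ω * n ^ (-(1 : ℝ) / 2) + u ω * n ^ (-(1 : ℝ))) ^ 2 ∂μ) := by
        have e0 : (μ {ω | (n ^ β) ^ 2
            ≤ (r ω + s ω * n ^ (-(1 : ℝ) / 2) + u ω * n ^ (-(1 : ℝ))) ^ 2}).toReal
            = ((n ^ β) ^ 2)⁻¹ * ((n ^ β) ^ 2 * (μ {ω | (n ^ β) ^ 2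
            ≤ (r ω + s ω * n ^ (-(1 : ℝ) / 2) + u ω * n ^ (-(1 : ℝ))) ^ 2}).toReal) := by
          rw [inv_mul_cancel_left₀ (pow_ne_zero 2 hε.ne')]
        rw [e0]
        exact mul_le_mul_of_nonneg_left hmar (inv_nonneg.mpr (sq_nonneg _))
    _ ≤ ((n ^ β) ^ 2)⁻¹ * (3 * Btot) := by
        refine mul_le_mul_of_nonneg_left ?_ (inv_nonneg.mpr (sq_nonneg _))
        calc (∫ ω, (r ω + s ω * n ^ (-(1 : ℝ) / 2) + u ω * n ^ (-(1 : ℝ))) ^ 2 ∂μ)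
            ≤ _ := hmono
          _ = 3 * ((∫ ω, r ω ^ 2 ∂μ) + (∫ ω, s ω ^ 2 ∂μ) * (n ^ (-(1 : ℝ) / 2)) ^ 2
              + (∫ ω, u ω ^ 2 ∂μ) * (n ^ (-(1 : ℝ))) ^ 2) := hRHSval
          _ = 3 * Btot := by rw [hBtotval]
    _ = n ^ (-(2 * β)) * (3 * Btot) := by rw [hpow]
    _ ≤ 9 * n ^ (-(2 * β)) * Btot := by
        have hnb : (0 : ℝ) ≤ n ^ (-(2 * β)) := Real.rpow_nonneg hn0.le _
        nlinarith
end

section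
/- Let η > 0 and σ > 0 be real numbers, and define f(x) = (η + σ^2 x)^2 and g(x) = σ^2 x (2η + σ^2 x). Then, as c → 1 with c ≠ 1, the ratio (f(1)·f(c^2) − f(c)^2) / (g(1)·g(c^2) − g(c)^2) tends to (η + σ^2)^2 / σ^4 = 1 + 2η/σ^2 + η^2/σ^4. -/
open Filter

/-- With `f(x) = (η + σ²x)²` and `g(x) = σ²x(2η + σ²x)`, the ratio
`(f(1)f(c²) − f(c)²) / (g(1)g(c²) − g(c)²)` tends to
`(η + σ²)²/σ⁴ = 1 + 2η/σ² + η²/σ⁴` as `c → 1`, `c ≠ 1`. -/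
theorem snr_determinant_ratio_limit (η σ : ℝ) (hη : 0 < η) (hσ : 0 < σ)
    (f g : ℝ → ℝ)
    (hf : f = fun x => (η + σ ^ 2 * x) ^ 2)
    (hg : g = fun x => σ ^ 2 * x * (2 * η + σ ^ 2 * x)) :
    Tendsto (fun c : ℝ =>
        (f 1 * f (c ^ 2) - (f c) ^ 2) / (g 1 * g (c ^ 2) - (g c) ^ 2))
      (nhdsWithin 1 {(1 : ℝ)}ᶜ)
      (nhds ((η + σ ^ 2) ^ 2 / σ ^ 4))
    ∧ (η + σ ^ 2) ^ 2 / σ ^ 4 = 1 + 2 * η / σ ^ 2 + η ^ 2 / σ ^ 4 := by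
  have hσ0 : σ ≠ 0 := ne_of_gt hσ
  have hη0 : η ≠ 0 := ne_of_gt hη
  constructor
  · -- the reduced function
    set F : ℝ → ℝ := fun c =>
      ((η + σ ^ 2) * (η + σ ^ 2 * c ^ 2) + (η + σ ^ 2 * c) ^ 2) / (2 * σ ^ 4 * c ^ 2)
      with hF
    have hFcont : ContinuousAt F 1 := by
      apply ContinuousAt.div
      · fun_prop
      · fun_prop
      · norm_num
        positivity
    have hF1 : F 1 = (η + σ ^ 2) ^ 2 / σ ^ 4 := by
      simp only [hF, one_pow, mul_one]
      rw [div_eq_div_iff (by positivity) (by positivity)]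
      ring
    have hFtendsto : Tendsto F (nhdsWithin 1 {(1 : ℝ)}ᶜ) (nhds ((η + σ ^ 2) ^ 2 / σ ^ 4)) := by
      rw [← hF1]
      exact hFcont.continuousWithinAt
    refine hFtendsto.congr' ?_
    have h0 : ∀ᶠ c : ℝ in nhdsWithin 1 {(1 : ℝ)}ᶜ, c ≠ 0 := by
      apply eventually_nhdsWithin_of_eventually_nhds
      exact eventually_ne_nhds (by norm_num)
    have h1 : ∀ᶠ c : ℝ in nhdsWithin 1 {(1 : ℝ)}ᶜ, c ≠ 1 :=
      eventually_mem_nhdsWithin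
    filter_upwards [h0, h1] with c hc0 hc1
    have hc1' : c - 1 ≠ 0 := sub_ne_zero.mpr hc1
    have hden : g 1 * g (c ^ 2) - (g c) ^ 2 = 2 * η * σ ^ 6 * c ^ 2 * (c - 1) ^ 2 := by
      subst hg; ring
    have hnum : f 1 * f (c ^ 2) - (f c) ^ 2 =
        η * σ ^ 2 * (c - 1) ^ 2 *
          ((η + σ ^ 2) * (η + σ ^ 2 * c ^ 2) + (η + σ ^ 2 * c) ^ 2) := by
      subst hf; ring
    rw [hF, hnum, hden]
    rw [div_eq_div_iff (by positivity) (by positivity)]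
    ring
  · field_simp
    ring
end

section
/- Let (Ω, P) be a probability space, let X be a real random variable with E[X] = 0 and E[X^2] = λ^2 > 0, let N = (N_1, ..., N_m) be a vector of square-integrable real random variables with E[N_i] = 0 for all i, such that X is independent of the vector N, and let ν ∈ ℝ^m. Define X̃ = νX + N (componentwise X̃_i = ν_i X + N_i). Let K_2 be the m×m covariance matrix of N and K_1 = K_2 + λ^2 νν^T the covariance matrix of X̃, and assume K_2 is positive definite. Then inf_{w ∈ ℝ^m} E[(w^T X̃ − X)^2] = λ^2 / (1 + SNR_a), where SNR_a = det(K_1)/det(K_2) − 1; moreover this infimum is attained by some w* ∈ ℝ^m. -/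
open MeasureTheory ProbabilityTheory

open Matrix

lemma my_det_fin_one {R : Type*} [CommRing R] (instD : DecidableEq (Fin 1))
    (instF : Fintype (Fin 1)) (A : Matrix (Fin 1) (Fin 1) R) :
    @Matrix.det (Fin 1) instD instF R _ A = A 0 0 := by
  obtain rfl := Subsingleton.elim instD (instDecidableEqFin 1)
  obtain rfl := Subsingleton.elim instF (Fin.fintype 1)
  exact Matrix.det_fin_one A

lemma integrable_mul_of_memL2 {Ω : Type*} [MeasurableSpace Ω] {μ : Measure Ω}
    {f g : Ω → ℝ} (hf : MemLp f 2 μ) (hg : MemLp g 2 μ) :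
    Integrable (fun ω => f ω * g ω) μ := by
  have h : MemLp (g • f) 1 μ := hf.smul (r := 1) hg
  have := memLp_one_iff_integrable.mp h
  have h2 : Integrable (f * g) μ := by simpa [Pi.smul_apply, smul_eq_mul, mul_comm] using this
  exact h2


lemma lmmse_ineq {lam s0 t q : ℝ} (hs0 : 0 ≤ s0) (hq : 0 ≤ q) (hcs : t ^ 2 ≤ q * s0) :
    lam ^ 2 ≤ (lam ^ 2 * (t - 1) ^ 2 + q) * (1 + lam ^ 2 * s0) := by
  have hcs2 : lam ^ 2 * t ^ 2 ≤ lam ^ 2 * (q * s0) :=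
    mul_le_mul_of_nonneg_left hcs (sq_nonneg lam)
  have hab : (lam ^ 2 * t * (t - 1)) ^ 2
      ≤ (lam ^ 2 * lam ^ 2 * s0 * (t - 1) ^ 2) * q := by
    have h := mul_le_mul_of_nonneg_right hcs
      (mul_nonneg (mul_nonneg (sq_nonneg lam) (sq_nonneg lam)) (sq_nonneg (t - 1)))
    nlinarith [h]
  have ha : 0 ≤ lam ^ 2 * lam ^ 2 * s0 * (t - 1) ^ 2 :=
    mul_nonneg (mul_nonneg (mul_nonneg (sq_nonneg lam) (sq_nonneg lam)) hs0)
      (sq_nonneg (t - 1))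
  have h2 : 0 ≤ lam ^ 2 * lam ^ 2 * s0 * (t - 1) ^ 2 + q
      + 2 * (lam ^ 2 * t * (t - 1)) := by
    nlinarith [hab, ha, hq,
      sq_nonneg (lam ^ 2 * lam ^ 2 * s0 * (t - 1) ^ 2 - q)]
  nlinarith [hcs2, h2]

lemma lmmse_eq {lam s0 : ℝ} (hpos : 0 < 1 + lam ^ 2 * s0) :
    lam ^ 2 / (1 + lam ^ 2 * s0)
      = lam ^ 2 * ((lam ^ 2 / (1 + lam ^ 2 * s0)) * s0 - 1) ^ 2
        + (lam ^ 2 / (1 + lam ^ 2 * s0)) * (lam ^ 2 / (1 + lam ^ 2 * s0)) * s0 := by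
  have hne : (1 : ℝ) + lam ^ 2 * s0 ≠ 0 := hpos.ne'
  field_simp
  ring

lemma lmmse_value {Ω : Type*} [MeasurableSpace Ω]
    (μ : Measure Ω) [IsProbabilityMeasure μ] {m : ℕ}
    (X : Ω → ℝ) (hX2 : MemLp X 2 μ)
    (hXmean : (∫ ω, X ω ∂μ) = 0)
    (N : Fin m → Ω → ℝ) (hN2 : ∀ i, MemLp (N i) 2 μ)
    (hindep : IndepFun X (fun ω => fun i => N i ω) μ)
    (ν : Fin m → ℝ) (w : Fin m → ℝ) :
    ∫ ω, ((∑ i, w i * (ν i * X ω + N i ω)) - X ω) ^ 2 ∂μ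
      = ((∑ i, w i * ν i) - 1) ^ 2 * (∫ ω, (X ω) ^ 2 ∂μ)
        + ∑ i, ∑ j, w i * w j * (∫ ω, N i ω * N j ω ∂μ) := by
  set t : ℝ := ∑ i, w i * ν i with ht
  set g : Ω → ℝ := fun ω => ∑ i, w i * N i ω with hgdef
  have hg2 : MemLp g 2 μ := by
    have := memLp_finset_sum (μ := μ) (f := fun i (ω : Ω) => w i * N i ω)
      Finset.univ (fun i _ => (hN2 i).const_mul (w i))
    exact this
  have hpt : ∀ ω, ((∑ i, w i * (ν i * X ω + N i ω)) - X ω) ^ 2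
      = (t - 1) ^ 2 * (X ω) ^ 2 + (2 * (t - 1)) * (X ω * g ω) + g ω * g ω := by
    intro ω
    have h1 : ∑ i, w i * (ν i * X ω + N i ω)
        = (∑ i, w i * ν i) * X ω + ∑ i, w i * N i ω := by
      rw [Finset.sum_mul, ← Finset.sum_add_distrib]
      exact Finset.sum_congr rfl fun i _ => by ring
    rw [h1]; simp only [hgdef]; ring
  have I1 : Integrable (fun ω => (t - 1) ^ 2 * (X ω) ^ 2) μ := by
    exact ((memLp_two_iff_integrable_sq hX2.aestronglyMeasurable).mp hX2).const_mul _
  have I2 : Integrable (fun ω => (2 * (t - 1)) * (X ω * g ω)) μ :=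
    (integrable_mul_of_memL2 hX2 hg2).const_mul _
  have I3 : Integrable (fun ω => g ω * g ω) μ := integrable_mul_of_memL2 hg2 hg2
  have hXg : (∫ ω, X ω * g ω ∂μ) = 0 := by
    have h2 : ∀ ω, X ω * g ω = ∑ i, w i * (X ω * N i ω) := by
      intro ω
      rw [hgdef, Finset.mul_sum]
      exact Finset.sum_congr rfl fun i _ => by ring
    rw [integral_congr_ae (ae_of_all μ h2),
      integral_finset_sum _ (fun i _ =>
        (integrable_mul_of_memL2 hX2 (hN2 i)).const_mul (w i))]
    refine Finset.sum_eq_zero fun i _ => ?_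
    rw [integral_const_mul]
    have hind_i : IndepFun X (N i) μ := by
      have := hindep.comp measurable_id (measurable_pi_apply i)
      exact this
    have := hind_i.integral_mul_eq_mul_integral hX2.aestronglyMeasurable
      (hN2 i).aestronglyMeasurable
    have hmul : (∫ ω, X ω * N i ω ∂μ) = (∫ ω, X ω ∂μ) * ∫ ω, N i ω ∂μ := this
    rw [hmul, hXmean, zero_mul, mul_zero]
  have hgg : (∫ ω, g ω * g ω ∂μ) = ∑ i, ∑ j, w i * w j * (∫ ω, N i ω * N j ω ∂μ) := by
    have h3 : ∀ ω, g ω * g ω = ∑ i, ∑ j, (w i * w j) * (N i ω * N j ω) := by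
      intro ω
      rw [hgdef, Finset.sum_mul_sum]
      exact Finset.sum_congr rfl fun i _ => Finset.sum_congr rfl fun j _ => by ring
    rw [integral_congr_ae (ae_of_all μ h3),
      integral_finset_sum (μ := μ)
        (f := fun i ω => ∑ j, (w i * w j) * (N i ω * N j ω)) _
        (fun i _ => integrable_finset_sum (μ := μ)
          (f := fun j ω => (w i * w j) * (N i ω * N j ω)) _ (fun j _ =>
          (integrable_mul_of_memL2 (hN2 i) (hN2 j)).const_mul _))]
    refine Finset.sum_congr rfl fun i _ => ?_
    rw [integral_finset_sum (μ := μ)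
        (f := fun j ω => (w i * w j) * (N i ω * N j ω)) _ (fun j _ =>
        (integrable_mul_of_memL2 (hN2 i) (hN2 j)).const_mul _)]
    exact Finset.sum_congr rfl fun j _ => by rw [integral_const_mul]
  calc ∫ ω, ((∑ i, w i * (ν i * X ω + N i ω)) - X ω) ^ 2 ∂μ
      = ∫ ω, ((t - 1) ^ 2 * (X ω) ^ 2 + (2 * (t - 1)) * (X ω * g ω) + g ω * g ω) ∂μ :=
        integral_congr_ae (ae_of_all μ hpt)
    _ = (t - 1) ^ 2 * (∫ ω, (X ω) ^ 2 ∂μ)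
        + ∑ i, ∑ j, w i * w j * (∫ ω, N i ω * N j ω ∂μ) := by
        have I12 : Integrable (fun ω => (t - 1) ^ 2 * (X ω) ^ 2
            + (2 * (t - 1)) * (X ω * g ω)) μ := I1.add I2
        rw [integral_add I12 I3, integral_add I1 I2, integral_const_mul,
          integral_const_mul, hXg, hgg]
        ring

/-- Linear MMSE estimation. For a zero-mean signal `X` with
variance `λ²`, observed as `X̃ = νX + N` with zero-mean noise vector `N`
independent of `X` and positive-definite noise covariance `K₂`, the minimum over
`w` of `E[(wᵀX̃ − X)²]` equals `λ²/(1 + SNR_a)` with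
`SNR_a = det K₁ / det K₂ − 1`, `K₁ = K₂ + λ²ννᵀ`, and the minimum is attained. -/
theorem lmmse_characterization {Ω : Type*} [MeasurableSpace Ω]
    (μ : Measure Ω) [IsProbabilityMeasure μ] {m : ℕ}
    (X : Ω → ℝ) (hXm : Measurable X) (hX2 : MemLp X 2 μ)
    (lam : ℝ) (hlam : 0 < lam)
    (hXmean : (∫ ω, X ω ∂μ) = 0) (hXvar : (∫ ω, (X ω) ^ 2 ∂μ) = lam ^ 2)
    (N : Fin m → Ω → ℝ)
    (hNm : ∀ i, Measurable (N i)) (hN2 : ∀ i, MemLp (N i) 2 μ)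
    (hNmean : ∀ i, (∫ ω, N i ω ∂μ) = 0)
    (hindep : IndepFun X (fun ω => fun i => N i ω) μ)
    (ν : Fin m → ℝ)
    (K₂ : Matrix (Fin m) (Fin m) ℝ)
    (hK₂ : K₂ = Matrix.of fun i j => ∫ ω, N i ω * N j ω ∂μ)
    (hK₂pos : K₂.PosDef)
    (K₁ : Matrix (Fin m) (Fin m) ℝ)
    (hK₁ : K₁ = K₂ + lam ^ 2 • Matrix.vecMulVec ν ν)
    (SNRa : ℝ) (hSNR : SNRa = K₁.det / K₂.det - 1) :
    IsLeast {e : ℝ | ∃ w : Fin m → ℝ,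
        e = ∫ ω, ((∑ i, w i * (ν i * X ω + N i ω)) - X ω) ^ 2 ∂μ}
      (lam ^ 2 / (1 + SNRa)) := by
  classical
  -- basic matrix facts
  have hdet : IsUnit K₂.det := isUnit_iff_ne_zero.mpr hK₂pos.det_pos.ne'
  set u : Fin m → ℝ := K₂⁻¹ *ᵥ ν with hu
  set s0 : ℝ := ν ⬝ᵥ u with hs0
  have hKinv : K₂ * K₂⁻¹ = 1 := Matrix.mul_nonsing_inv _ hdet
  have hKu : K₂ *ᵥ u = ν := by
    rw [hu, Matrix.mulVec_mulVec, hKinv, Matrix.one_mulVec]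
  have hs0nn : 0 ≤ s0 := by
    have h := hK₂pos.inv.posSemidef.dotProduct_mulVec_nonneg ν
    simpa [hs0, hu] using h
  -- determinant computation
  have hdet1 : K₁.det = K₂.det * (1 + lam ^ 2 * s0) := by
    have h1 : K₁ = K₂ + Matrix.replicateCol (Fin 1) (lam ^ 2 • ν) * Matrix.replicateRow (Fin 1) ν := by
      rw [hK₁]
      congr 1
      ext i j
      simp [Matrix.vecMulVec_apply, Matrix.mul_apply, Matrix.replicateCol, Matrix.replicateRow,
        Fin.sum_univ_one]
      ring
    rw [h1, Matrix.det_add_mul _ _ hdet]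
    congr 1
    rw [my_det_fin_one]
    simp only [Matrix.add_apply, Matrix.one_apply_eq, Matrix.mul_apply,
      Matrix.replicateCol, Matrix.replicateRow, dotProduct, Matrix.mulVec, Matrix.of_apply,
      Finset.mul_sum, Finset.sum_mul, Pi.smul_apply, smul_eq_mul]
    congr 1
    rw [hs0, hu]
    simp only [dotProduct, Matrix.mulVec, Finset.mul_sum]
    rw [Finset.sum_comm]
    exact Finset.sum_congr rfl fun i _ => Finset.sum_congr rfl fun j _ => by ring
  have hSNR' : SNRa = lam ^ 2 * s0 := by
    have hne : K₂.det ≠ 0 := hK₂pos.det_pos.ne'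
    rw [hSNR, hdet1]
    field_simp
    ring
  have h1S : 0 < 1 + SNRa := by
    rw [hSNR']
    have : 0 ≤ lam ^ 2 * s0 := mul_nonneg (sq_nonneg lam) hs0nn
    linarith
  -- symmetry of K₂
  have hsym : K₂ᵀ = K₂ := by
    rw [hK₂]
    ext i j
    simp only [Matrix.transpose_apply, Matrix.of_apply]
    simp_rw [mul_comm]
  -- the value of the objective
  have hval : ∀ w : Fin m → ℝ,
      (∫ ω, ((∑ i, w i * (ν i * X ω + N i ω)) - X ω) ^ 2 ∂μ)
        = lam ^ 2 * ((w ⬝ᵥ ν) - 1) ^ 2 + w ⬝ᵥ (K₂ *ᵥ w) := by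
    intro w
    rw [lmmse_value μ X hX2 hXmean N hN2 hindep ν w, hXvar]
    have hq : ∑ i, ∑ j, w i * w j * (∫ ω, N i ω * N j ω ∂μ) = w ⬝ᵥ (K₂ *ᵥ w) := by
      rw [hK₂]
      simp only [dotProduct, Matrix.mulVec, Matrix.of_apply, Finset.mul_sum]
      refine Finset.sum_congr rfl fun i _ => Finset.sum_congr rfl fun j _ => by ring
    rw [hq]
    have htw : (∑ i, w i * ν i) = w ⬝ᵥ ν := rfl
    rw [htw]; ring
  -- quadratic form nonneg and Cauchy-Schwarz
  have hq_nn : ∀ w : Fin m → ℝ, 0 ≤ w ⬝ᵥ (K₂ *ᵥ w) := by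
    intro w
    have h := hK₂pos.posSemidef.dotProduct_mulVec_nonneg w
    simpa using h
  have hCS : ∀ w : Fin m → ℝ, (w ⬝ᵥ ν) ^ 2 ≤ (w ⬝ᵥ (K₂ *ᵥ w)) * s0 := by
    intro w
    set t : ℝ := w ⬝ᵥ ν with htdef
    set q : ℝ := w ⬝ᵥ (K₂ *ᵥ w) with hqdef
    have huKw : u ⬝ᵥ (K₂ *ᵥ w) = t := by
      rw [dotProduct_mulVec, ← hsym, Matrix.vecMul_transpose, hKu,
        dotProduct_comm]
    have key : ∀ c : ℝ, 0 ≤ s0 * (c * c) + (-2 * t) * c + q := by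
      intro c
      have e1 : K₂ *ᵥ (w - c • u) = K₂ *ᵥ w - c • ν := by
        rw [Matrix.mulVec_sub, Matrix.mulVec_smul, hKu]
      have h0 : 0 ≤ (w - c • u) ⬝ᵥ (K₂ *ᵥ (w - c • u)) := by
        have h := hK₂pos.posSemidef.dotProduct_mulVec_nonneg (w - c • u)
        simpa using h
      rw [e1, sub_dotProduct, dotProduct_sub, dotProduct_sub,
        smul_dotProduct, smul_dotProduct, dotProduct_smul,
        dotProduct_smul, huKw] at h0
      have hwv : w ⬝ᵥ (c • ν) = c * t := by
        rw [dotProduct_smul, htdef]; simp [smul_eq_mul]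
      have huv : u ⬝ᵥ ν = s0 := by rw [dotProduct_comm, hs0]
      simp only [smul_eq_mul, huv] at h0
      nlinarith [h0]
    have hd := discrim_le_zero key
    rw [discrim] at hd
    nlinarith [hd]
  -- conclusion
  constructor
  · -- membership: the optimal w
    refine ⟨(lam ^ 2 / (1 + SNRa)) • u, ?_⟩
    have htw : ((lam ^ 2 / (1 + SNRa)) • u) ⬝ᵥ ν = (lam ^ 2 / (1 + SNRa)) * s0 := by
      rw [smul_dotProduct, smul_eq_mul, dotProduct_comm, ← hs0]
    have hqw : ((lam ^ 2 / (1 + SNRa)) • u) ⬝ᵥ (K₂ *ᵥ ((lam ^ 2 / (1 + SNRa)) • u))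
        = (lam ^ 2 / (1 + SNRa)) * (lam ^ 2 / (1 + SNRa)) * s0 := by
      rw [Matrix.mulVec_smul, smul_dotProduct, dotProduct_smul, hKu,
        smul_eq_mul, smul_eq_mul, dotProduct_comm, ← hs0]
      ring
    have hpos : (0 : ℝ) < 1 + lam ^ 2 * s0 := by rw [hSNR'] at h1S; exact h1S
    rw [hval, htw, hqw, hSNR']
    exact lmmse_eq hpos
  · -- lower bound
    rintro e ⟨w, rfl⟩
    rw [hval w]
    set t : ℝ := w ⬝ᵥ ν with htdef
    set q : ℝ := w ⬝ᵥ (K₂ *ᵥ w) with hqdef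
    have hcs := hCS w
    rw [← htdef, ← hqdef] at hcs
    have hq0 : 0 ≤ q := hq_nn w
    rw [hSNR', div_le_iff₀ (by rw [hSNR'] at h1S; exact h1S)]
    exact lmmse_ineq hs0nn hq0 hcs
end
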